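/- Let H = [[A, B], [-Bᴴ, -Aᵀ]] be a BSE matrix of form II (A = Aᴴ, B = Bᵀ, A, B ∈ ℂ^{n×n}) such that Σ·H = [[A, B], [Bᴴ, Aᵀ]] is positive definite. Then every eigenvalue λ of H is real, and if v = (v⁽¹⁾, v⁽²⁾) ∈ ℂ^{2n} satisfies H·v = λ·v, then the vector y = (conj(v⁽²⁾), conj(v⁽¹⁾)), i.e. y = F·conj(v) with F = [[0, Iₙ], [Iₙ, 0]], satisfies H·y = (-λ)·y. -/

import Mathlib

open Matrix ComplexOrder

/-- For a BSE matrix of form II with positive definite BSE Hamiltonian, all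
eigenvalues are real, and flipping and conjugating the two block components of
an eigenvector for `λ` gives an eigenvector for `-λ`. -/
theorem bse_form_two_real_eigenvalues_and_flip
    (n : ℕ) (A B : Matrix (Fin n) (Fin n) ℂ)
    (hA : A = Aᴴ) (hB : B = Bᵀ)
    (H F : Matrix (Fin n ⊕ Fin n) (Fin n ⊕ Fin n) ℂ)
    (hH : H = fromBlocks A B (-Bᴴ) (-Aᵀ))
    (hF : F = fromBlocks 0 1 1 0)
    (hpd : (fromBlocks A B Bᴴ Aᵀ).PosDef) :
    (∀ (lam : ℂ) (v : Fin n ⊕ Fin n → ℂ), v ≠ 0 → H *ᵥ v = lam • v → lam.im = 0) ∧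
    (∀ (lam : ℂ) (v : Fin n ⊕ Fin n → ℂ), H *ᵥ v = lam • v →
      H *ᵥ (F *ᵥ star v) = (-lam) • (F *ᵥ star v)) := by
  set S : Matrix (Fin n ⊕ Fin n) (Fin n ⊕ Fin n) ℂ := fromBlocks 1 0 0 (-1) with hS
  have hSH : S * H = fromBlocks A B Bᴴ Aᵀ := by
    rw [hS, hH]
    simp [fromBlocks_multiply]
  have hSherm : Sᴴ = S := by
    rw [hS]
    simp [fromBlocks_conjTranspose]
  have part1 : ∀ (lam : ℂ) (v : Fin n ⊕ Fin n → ℂ), v ≠ 0 → H *ᵥ v = lam • v → lam.im = 0 := by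
    intro lam v hv hev
    have hMv : (fromBlocks A B Bᴴ Aᵀ) *ᵥ v = lam • (S *ᵥ v) := by
      rw [← hSH, ← mulVec_mulVec, hev, mulVec_smul]
    have hp : 0 < star v ⬝ᵥ ((fromBlocks A B Bᴴ Aᵀ) *ᵥ v) := hpd.dotProduct_mulVec_pos hv
    set p := star v ⬝ᵥ ((fromBlocks A B Bᴴ Aᵀ) *ᵥ v) with hpdef
    set q := star v ⬝ᵥ (S *ᵥ v) with hqdef
    have hpq : p = lam * q := by
      rw [hpdef, hMv, dotProduct_smul, hqdef, smul_eq_mul]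
    have hqstar : star q = q := by
      rw [hqdef]
      calc star (star v ⬝ᵥ S *ᵥ v) = star (S *ᵥ v) ⬝ᵥ v := (star_dotProduct _ _).symm
        _ = (star v ᵥ* Sᴴ) ⬝ᵥ v := by rw [star_mulVec]
        _ = star v ⬝ᵥ (S *ᵥ v) := by rw [hSherm, ← dotProduct_mulVec]
    have hqim : q.im = 0 := by
      have := congrArg Complex.im hqstar
      simp at this
      linarith
    have hpim : p.im = 0 := by
      have := (Complex.lt_def.mp hp).2
      simpa using this.symm
    have hpre : 0 < p.re := (Complex.lt_def.mp hp).1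
    have hqre : q.re ≠ 0 := by
      intro h0
      have hq0 : q = 0 := Complex.ext h0 hqim
      rw [hq0, mul_zero] at hpq
      rw [hpq] at hpre
      simp at hpre
    have : p.im = lam.im * q.re + lam.re * q.im := by
      rw [hpq, Complex.mul_im]; ring
    rw [hpim, hqim] at this
    field_simp at this
    exact (mul_eq_zero.mp (by linarith : lam.im * q.re = 0)).resolve_right hqre
  refine ⟨part1, ?_⟩
  intro lam v hev
  by_cases hv : v = 0
  · subst hv
    simp
  · have him := part1 lam v hv hev
    have hlam : star lam = lam := by
      rw [Complex.star_def, Complex.conj_eq_iff_im]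
      exact him
    have hkey : H * F = -(F * Hᴴᵀ) := by
      rw [hH, hF]
      rw [fromBlocks_conjTranspose, fromBlocks_transpose]
      simp only [fromBlocks_multiply, Matrix.mul_zero, Matrix.mul_one, Matrix.zero_mul,
        Matrix.one_mul, zero_add, add_zero, conjTranspose_neg, transpose_neg,
        Matrix.fromBlocks_neg, neg_neg]
      have e1 : Bᴴᴴᵀ = B := by rw [conjTranspose_conjTranspose, ← hB]
      have e2 : Aᵀᴴᵀ = A := by
        conv_rhs => rw [hA]
        ext i j; simp
      have e3 : Aᴴᵀ = Aᵀ := by rw [← hA]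
      have e4 : Bᴴᵀ = Bᴴ := by
        conv_rhs => rw [hB]
        ext i j; simp
      rw [e1, e2, e3, e4]
    have h2 : Hᴴᵀ *ᵥ star v = lam • star v := by
      have h1 : star (H *ᵥ v) = Hᴴᵀ *ᵥ star v := by
        rw [star_mulVec, ← mulVec_transpose]
      rw [← h1, hev, star_smul, hlam]
    calc H *ᵥ (F *ᵥ star v) = (H * F) *ᵥ star v := by rw [mulVec_mulVec]
      _ = -((F * Hᴴᵀ) *ᵥ star v) := by rw [hkey, neg_mulVec]
      _ = -(F *ᵥ (Hᴴᵀ *ᵥ star v)) := by rw [mulVec_mulVec]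
      _ = -(F *ᵥ (lam • star v)) := by rw [h2]
      _ = (-lam) • (F *ᵥ star v) := by rw [mulVec_smul, neg_smul]
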